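/- If B is a Bohr set in a finite abelian group G whose frequency set consists of a single character γ and whose width function is constantly 2, then for every η > 0, μ_G(B_η) ≥ (1/π)·min(η, 2). -/

import Mathlib

open Finset

lemma abs_one_sub_exp_aux (θ : ℝ) :
    ‖1 - Complex.exp (θ * Complex.I)‖ = 2 * |Real.sin (θ / 2)| := by
  have h1 : (1 : ℂ) - Complex.exp (θ * Complex.I)
      = Complex.ofReal (1 - Real.cos θ) + Complex.ofReal (-Real.sin θ) * Complex.I := by
    rw [Complex.exp_mul_I, ← Complex.ofReal_cos, ← Complex.ofReal_sin]
    push_cast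
    ring
  rw [h1, Complex.norm_add_mul_I, Real.abs_sin_half]
  rw [show 2 * Real.sqrt ((1 - Real.cos θ) / 2)
      = Real.sqrt (4 * ((1 - Real.cos θ) / 2)) by
    rw [Real.sqrt_mul (by norm_num), show Real.sqrt 4 = 2 by
      rw [show (4:ℝ) = 2^2 by norm_num, Real.sqrt_sq (by norm_num)]]]
  congr 1
  nlinarith [Real.sin_sq_add_cos_sq θ]

lemma two_floor_add_one_ge {u : ℝ} (hu : 0 ≤ u) : u ≤ 2 * (⌊u⌋ : ℝ) + 1 := by
  have h1 : (⌊u⌋ : ℝ) ≤ u := Int.floor_le u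
  have h2 : u - 1 < (⌊u⌋ : ℝ) := Int.sub_one_lt_floor u
  rcases le_or_gt u 1 with h | h
  · have : (0:ℝ) ≤ (⌊u⌋ : ℝ) := by
      exact_mod_cast Int.floor_nonneg.2 hu
    linarith
  · linarith

/-- Lower bound for the measure of a Bohr set with a single frequency and width `2`. -/
theorem bohr_single_char_lower (G : Type) [AddCommGroup G] [Fintype G]
    (γ : AddChar G ℂ) (η : ℝ) (hη : 0 < η) :
    (1 / Real.pi) * min η 2 ≤
      (({x : G | ‖1 - γ x‖ ≤ min (2 * η) 2}).ncard : ℝ) / Fintype.card G := by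
  classical
  have hπ := Real.pi_pos
  set N := Fintype.card G with hNdef
  have hN : 0 < N := Fintype.card_pos
  -- every value of γ has absolute value 1
  have habs : ∀ x : G, ‖γ x‖ = 1 := by
    intro x
    have h1 : (γ x) ^ N = 1 := by
      rw [← AddChar.map_nsmul_eq_pow, card_nsmul_eq_zero, AddChar.map_zero_eq_one]
    have h2 : (‖γ x‖) ^ N = 1 := by
      rw [← norm_pow, h1, norm_one]
    have h0 : 0 ≤ ‖γ x‖ := norm_nonneg _
    rcases lt_trichotomy (‖γ x‖) 1 with h | h | h
    · have := pow_lt_one₀ h0 h hN.ne'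
      rw [h2] at this; exact absurd this (lt_irrefl _)
    · exact h
    · have := one_lt_pow₀ h hN.ne'
      rw [h2] at this; exact absurd this (lt_irrefl _)
  have hne0 : ∀ x : G, γ x ≠ 0 := by
    intro x h
    have := habs x
    rw [h, norm_zero] at this; norm_num at this
  -- generic bound |1 - γ x| ≤ 2
  have hle2 : ∀ x : G, ‖1 - γ x‖ ≤ 2 := by
    intro x
    calc ‖1 - γ x‖ ≤ ‖(1:ℂ)‖ + ‖γ x‖ :=
          norm_sub_le _ _
      _ = 2 := by rw [norm_one, habs x]; norm_num
  -- translate ncard into a filter card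
  have hncard : ∀ (p : G → Prop) [DecidablePred p],
      ({x : G | p x}).ncard = (univ.filter p).card := by
    intro p hp
    rw [Set.ncard_eq_toFinset_card']
    congr 1
    ext x
    simp
  rcases le_or_gt 1 η with hη1 | hη1
  -- trivial case η ≥ 1 : the set is everything
  · have hset : {x : G | ‖1 - γ x‖ ≤ min (2 * η) 2} = Set.univ := by
      ext x
      simp only [Set.mem_setOf_eq, Set.mem_univ, iff_true]
      exact le_min (by linarith [hle2 x]) (hle2 x)
    rw [hset, Set.ncard_univ, Nat.card_eq_fintype_card]
    rw [div_self (by positivity : (N:ℝ) ≠ 0)]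
    have h2 : min η 2 ≤ 2 := min_le_right _ _
    have h3 : Real.pi > 3 := Real.pi_gt_three
    rw [div_mul_eq_mul_div, div_le_one₀ hπ]
    nlinarith
  -- main case η < 1
  · have hmin2 : min (2 * η) 2 = 2 * η := min_eq_left (by linarith)
    have hminη : min η 2 = η := min_eq_left (by linarith)
    rw [hmin2, hminη]
    -- image of γ
    set S : Finset ℂ := univ.image (fun x : G => γ x) with hSdef
    set m := S.card with hmdef
    have hmpos : 0 < m := Finset.card_pos.2 ⟨γ 0, Finset.mem_image_of_mem _ (mem_univ 0)⟩
    set k := (univ.filter (fun x : G => γ x = 1)).card with hkdef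
    have hkpos : 0 < k := Finset.card_pos.2 ⟨0, by simp [AddChar.map_zero_eq_one]⟩
    -- all fibers have size k
    have fiber_card : ∀ z ∈ S, (univ.filter (fun x : G => γ x = z)).card = k := by
      intro z hz
      obtain ⟨x0, -, hx0⟩ := Finset.mem_image.1 hz
      rw [hkdef]
      apply Finset.card_bij' (fun x _ => x - x0) (fun y _ => y + x0)
      · intro x hx
        simp only [mem_filter, mem_univ, true_and] at hx ⊢
        have h1 : γ (x - x0) * γ x0 = γ x := by
          rw [← AddChar.map_add_eq_mul, sub_add_cancel]
        have hz0 : z ≠ 0 := hx0 ▸ hne0 x0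
        rw [hx, hx0] at h1
        have h2 : γ (x - x0) * z = 1 * z := by rw [one_mul, h1]
        exact mul_right_cancel₀ hz0 h2
      · intro y hy
        simp only [mem_filter, mem_univ, true_and] at hy ⊢
        rw [AddChar.map_add_eq_mul, hy, one_mul, hx0]
      · intro x _; exact sub_add_cancel x x0
      · intro y _; exact add_sub_cancel_right y x0
    -- N = m * k
    have hNmk : N = m * k := by
      have h1 : (univ : Finset G).card = ∑ z ∈ S, (univ.filter (fun x : G => γ x = z)).card :=
        Finset.card_eq_sum_card_fiberwise
          (fun x _ => Finset.mem_image_of_mem _ (mem_univ x))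
      rw [Finset.card_univ] at h1
      rw [hNdef, h1, Finset.sum_congr rfl fiber_card, Finset.sum_const, smul_eq_mul]
    -- every element of S is an m-th root of unity
    have pow_eq_one : ∀ z ∈ S, z ^ m = 1 := by
      intro z hz
      obtain ⟨x, -, hx⟩ := Finset.mem_image.1 hz
      have hz0 : z ≠ 0 := hx ▸ hne0 x
      have hprod : ∏ a ∈ S, (z * a) = ∏ a ∈ S, a := by
        apply Finset.prod_bij' (fun a _ => z * a) (fun b _ => z⁻¹ * b)
        · intro a ha
          obtain ⟨y, -, hy⟩ := Finset.mem_image.1 ha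
          rw [← hx, ← hy, ← AddChar.map_add_eq_mul]
          exact Finset.mem_image_of_mem _ (mem_univ _)
        · intro b hb
          obtain ⟨y, -, hy⟩ := Finset.mem_image.1 hb
          have h1 : γ (y - x) * γ x = γ y := by
            rw [← AddChar.map_add_eq_mul, sub_add_cancel]
          rw [hx, hy] at h1
          have h2 : z⁻¹ * b = γ (y - x) := by
            rw [← h1, mul_comm (γ (y - x)) z, inv_mul_cancel_left₀ hz0]
          rw [h2]
          exact Finset.mem_image_of_mem _ (mem_univ _)
        · intro a _; rw [inv_mul_cancel_left₀ hz0]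
        · intro b _; rw [mul_inv_cancel_left₀ hz0]
        · intro a _; rfl
      rw [Finset.prod_mul_distrib, Finset.prod_const, ← hmdef] at hprod
      have hprodne : ∏ a ∈ S, a ≠ 0 := by
        apply Finset.prod_ne_zero_iff.2
        intro a ha
        obtain ⟨y, -, hy⟩ := Finset.mem_image.1 ha
        exact hy ▸ hne0 y
      have hprod' : z ^ m * ∏ a ∈ S, a = 1 * ∏ a ∈ S, a := by
        rw [one_mul]; exact hprod
      exact mul_right_cancel₀ hprodne hprod'
    -- S is exactly the set of m-th roots of unity
    have hprim := Complex.isPrimitiveRoot_exp m hmpos.ne'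
    have hSeq : S = Polynomial.nthRootsFinset m (1 : ℂ) := by
      apply Finset.eq_of_subset_of_card_le
      · intro z hz
        exact (Polynomial.mem_nthRootsFinset hmpos 1).2 (pow_eq_one z hz)
      · rw [hprim.card_nthRootsFinset]
    -- setup arcsin
    set c := Real.arcsin η with hcdef
    have hc0 : 0 < c := Real.arcsin_pos.2 hη
    have hcπ : c < Real.pi / 2 := Real.arcsin_lt_pi_div_two.2 hη1
    have hsinc : Real.sin c = η := Real.sin_arcsin (by linarith) (by linarith)
    have hηc : η ≤ c := by
      have := Real.sin_le hc0.le
      rw [hsinc] at this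
      linarith
    set u : ℝ := m * c / Real.pi with hudef
    have hu0 : 0 ≤ u := div_nonneg (mul_nonneg (Nat.cast_nonneg _) hc0.le) hπ.le
    set t : ℤ := ⌊u⌋ with htdef
    have ht0 : 0 ≤ t := Int.floor_nonneg.2 hu0
    have htu : (t : ℝ) ≤ u := Int.floor_le u
    have h2tm : 2 * t < (m : ℤ) := by
      have : 2 * (t:ℝ) < (m:ℝ) := by
        have h1 : u < (m:ℝ) / 2 := by
          rw [hudef, div_lt_div_iff₀ hπ (by norm_num : (0:ℝ) < 2)]
          have : (0:ℝ) < m := by exact_mod_cast hmpos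
          nlinarith
        linarith
      exact_mod_cast this
    -- the injection from Icc (-t) t into good roots
    set e : ℤ → ℂ := fun j => Complex.exp ((2 * Real.pi * j / m : ℝ) * Complex.I) with hedef
    set goodS := S.filter (fun z => ‖1 - z‖ ≤ 2 * η) with hgoodSdef
    have hmem : ∀ j ∈ Finset.Icc (-t) t, e j ∈ goodS := by
      intro j hj
      rw [Finset.mem_Icc] at hj
      have hjt : |j| ≤ t := abs_le.2 hj
      rw [hgoodSdef, Finset.mem_filter]
      constructor
      · -- e j ∈ S
        rw [hSeq]
        refine (Polynomial.mem_nthRootsFinset hmpos 1).2 ?_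
        rw [hedef]
        simp only
        rw [← Complex.exp_nat_mul]
        have harg : (m : ℂ) * ((2 * Real.pi * j / m : ℝ) * Complex.I)
            = (j : ℂ) * (2 * Real.pi * Complex.I) := by
          have hm0 : (m : ℂ) ≠ 0 := by exact_mod_cast hmpos.ne'
          push_cast
          field_simp
        rw [harg, Complex.exp_int_mul_two_pi_mul_I]
      · -- |1 - e j| ≤ 2η
        rw [hedef]
        simp only
        rw [abs_one_sub_exp_aux]
        have hhalf : (2 * Real.pi * j / m) / 2 = Real.pi * j / m := by ring
        rw [hhalf]
        set x : ℝ := Real.pi * j / m with hxdef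
        have hxc : |x| ≤ c := by
          have h1 : |x| = Real.pi * |(j:ℝ)| / m := by
            rw [hxdef, abs_div, abs_mul, abs_of_pos hπ, abs_of_pos (by exact_mod_cast hmpos : (0:ℝ) < m)]
          have h2 : |(j:ℝ)| ≤ (t:ℝ) := by exact_mod_cast hjt
          rw [h1]
          rw [div_le_iff₀ (by exact_mod_cast hmpos : (0:ℝ) < m)]
          have h3 : (t:ℝ) ≤ m * c / Real.pi := htu
          have h4 : (t:ℝ) * Real.pi ≤ (m:ℝ) * c := by rwa [le_div_iff₀ hπ] at h3
          have h5 : Real.pi * |(j:ℝ)| ≤ Real.pi * t := mul_le_mul_of_nonneg_left h2 hπ.le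
          linarith
        have hxabs : |Real.sin x| ≤ Real.sin c := by
          have h4 : |Real.sin x| = Real.sin |x| := by
            rcases le_or_gt 0 x with h | h
            · rw [abs_of_nonneg h, abs_of_nonneg]
              exact Real.sin_nonneg_of_nonneg_of_le_pi h (by rw [abs_of_nonneg h] at hxc; linarith)
            · rw [abs_of_neg h, Real.sin_neg, abs_of_nonpos]
              apply Real.sin_nonpos_of_nonpos_of_neg_pi_le h.le
              rw [abs_of_neg h] at hxc; linarith
          rw [h4]
          apply Real.strictMonoOn_sin.monotoneOn
          · constructor
            · linarith [abs_nonneg x]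
            · linarith
          · constructor <;> linarith
          · exact hxc
        rw [hsinc] at hxabs
        linarith
    have hinj : Set.InjOn e (Finset.Icc (-t) t) := by
      intro j hj j' hj' hee
      rw [Finset.coe_Icc, Set.mem_Icc] at hj hj'
      obtain ⟨n, hn⟩ := Complex.exp_eq_exp_iff_exists_int.1 hee
      have hm0 : (m : ℂ) ≠ 0 := by exact_mod_cast hmpos.ne'
      have hπ0 : (Real.pi : ℂ) ≠ 0 := by exact_mod_cast hπ.ne'
      have hI := Complex.I_ne_zero
      have hjc : (j : ℂ) = j' + n * m := by
        push_cast at hn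
        field_simp at hn
        have h5 : ((j : ℂ) - j' - n * m) * (2 * (Real.pi : ℂ) * Complex.I) = 0 := by
          linear_combination (2 * (Real.pi : ℂ) * Complex.I) * hn
        have h6 : (j : ℂ) - j' - n * m = 0 := by
          rcases mul_eq_zero.1 h5 with h | h
          · exact h
          · exfalso
            apply hI
            rcases mul_eq_zero.1 h with h' | h'
            · exfalso
              rcases mul_eq_zero.1 h' with h'' | h''
              · norm_num at h''
              · exact hπ0 h''
            · exact h'
        linear_combination h6
      have hjz : j = j' + n * m := by exact_mod_cast hjc
      have hn0 : n = 0 := by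
        by_contra hne
        have h1 : (1:ℤ) ≤ |n| := Int.one_le_abs hne
        have h2 : (m:ℤ) ≤ |n| * m := le_mul_of_one_le_left (by exact_mod_cast Nat.zero_le m) h1
        have h3 : |n * (m:ℤ)| = |n| * m := by
          rw [abs_mul, abs_of_nonneg (by exact_mod_cast Nat.zero_le m : (0:ℤ) ≤ (m:ℤ))]
        have h4 : |n * (m:ℤ)| = |j - j'| := by rw [show j - j' = n * m by omega]
        have h5 : |j - j'| ≤ 2 * t := by
          rw [abs_le]; omega
        linarith
      rw [hn0] at hjz
      simpa using hjz
    have hcard_good : (Finset.Icc (-t) t).card ≤ goodS.card :=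
      Finset.card_le_card_of_injOn e hmem hinj
    have hIcc_card : ((Finset.Icc (-t) t).card : ℝ) = 2 * (t:ℝ) + 1 := by
      rw [Int.card_Icc]
      have h6 : t + 1 - (-t) = 2 * t + 1 := by ring
      rw [h6]
      have h7 : ((2 * t + 1).toNat : ℤ) = 2 * t + 1 := Int.toNat_of_nonneg (by omega)
      exact_mod_cast h7
    -- goodS.card ≥ m η / π
    have hgood : (m : ℝ) * η / Real.pi ≤ (goodS.card : ℝ) := by
      have h1 : (m : ℝ) * η / Real.pi ≤ u := by
        rw [hudef]
        exact div_le_div_of_nonneg_right (mul_le_mul_of_nonneg_left hηc (Nat.cast_nonneg _)) hπ.le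
      have h2 : u ≤ 2 * (t:ℝ) + 1 := two_floor_add_one_ge hu0
      have h3 : ((Finset.Icc (-t) t).card : ℝ) ≤ (goodS.card : ℝ) := by exact_mod_cast hcard_good
      rw [hIcc_card] at h3
      linarith
    -- count the Bohr set via fibers over goodS
    set A := univ.filter (fun x : G => ‖1 - γ x‖ ≤ 2 * η) with hAdef
    have hAcard : A.card = goodS.card * k := by
      have h1 : A.card = ∑ z ∈ goodS, (A.filter (fun x => γ x = z)).card := by
        apply Finset.card_eq_sum_card_fiberwise
        intro x hx
        rw [Finset.mem_coe, hAdef, mem_filter] at hx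
        rw [Finset.mem_coe, hgoodSdef, mem_filter]
        exact ⟨Finset.mem_image_of_mem _ (mem_univ x), hx.2⟩
      rw [h1, Finset.sum_congr rfl ?_, Finset.sum_const, smul_eq_mul]
      intro z hz
      rw [hgoodSdef, mem_filter] at hz
      rw [← fiber_card z hz.1]
      congr 1
      ext x
      simp only [hAdef, mem_filter, mem_univ, true_and, and_iff_right_iff_imp]
      intro h
      rw [h]
      exact hz.2
    -- finish
    rw [hncard (fun x => ‖1 - γ x‖ ≤ 2 * η)]
    have hA : ((univ.filter (fun x : G => ‖1 - γ x‖ ≤ 2 * η)).card : ℝ)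
        = (goodS.card : ℝ) * k := by exact_mod_cast hAcard
    rw [hA, le_div_iff₀ (by exact_mod_cast hN : (0:ℝ) < (N:ℝ))]
    have hNr : (N:ℝ) = (m:ℝ) * k := by exact_mod_cast hNmk
    have hkr : (1:ℝ) ≤ (k:ℝ) := by exact_mod_cast hkpos
    rw [hNr]
    have := mul_le_mul_of_nonneg_right hgood (Nat.cast_nonneg k : (0:ℝ) ≤ (k:ℝ))
    calc (1 / Real.pi) * η * ((m:ℝ) * k) = ((m:ℝ) * η / Real.pi) * k := by ring
      _ ≤ (goodS.card : ℝ) * k := this
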